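/- Among all prefix-closed subtrees of size N of a rooted candidate lattice with multiplicative path scores, the maximal achievable score sum, as a function of N, is concave: its increments over N are non-increasing. -/
import Mathlib


/-- A candidate lattice: a rooted tree with multiplicative path scores, where each
node multiplies its parent's score by a weight in [0,1], and the root has score 1. -/
structure ScoreTree (σ : Type) where
  root : σ
  parent : σ → σ
  depth : σ → ℕ
  weight : σ → ℝ
  score : σ → ℝ
  parent_root : parent root = root
  depth_root : depth root = 0
  depth_node : ∀ i, i ≠ root → depth i = depth (parent i) + 1
  weight_nonneg : ∀ i, 0 ≤ weight i
  weight_le_one : ∀ i, weight i ≤ 1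
  score_root : score root = 1
  score_node : ∀ i, i ≠ root → score i = score (parent i) * weight i

lemma ScoreTree.score_nonneg {σ : Type} (T : ScoreTree σ) : ∀ i, 0 ≤ T.score i := by
  have key : ∀ n i, T.depth i ≤ n → 0 ≤ T.score i := by
    intro n
    induction n with
    | zero =>
      intro i hd
      by_cases hr : i = T.root
      · rw [hr, T.score_root]; norm_num
      · have := T.depth_node i hr; omega
    | succ n ih =>
      intro i hd
      by_cases hr : i = T.root
      · rw [hr, T.score_root]; norm_num
      · have hdn := T.depth_node i hr
        rw [T.score_node i hr]
        exact mul_nonneg (ih _ (by omega)) (T.weight_nonneg i)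
  intro i; exact key (T.depth i) i le_rfl

lemma ScoreTree.score_le_parent {σ : Type} (T : ScoreTree σ) (i : σ) (h : i ≠ T.root) :
    T.score i ≤ T.score (T.parent i) := by
  rw [T.score_node i h]
  calc T.score (T.parent i) * T.weight i ≤ T.score (T.parent i) * 1 :=
        mul_le_mul_of_nonneg_left (T.weight_le_one i) (T.score_nonneg _)
    _ = T.score (T.parent i) := mul_one _

/-- From any element of C not in A, walking up the parent chain we find an
element of C outside A whose parent is in A, with at least as large a score. -/
lemma ScoreTree.exists_entry {σ : Type} (T : ScoreTree σ) (A C : Finset σ)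
    (hrootA : T.root ∈ A) (hC : ∀ i ∈ C, T.parent i ∈ C) :
    ∀ n x, T.depth x ≤ n → x ∈ C → x ∉ A →
      ∃ y, y ∈ C ∧ y ∉ A ∧ T.parent y ∈ A ∧ T.score x ≤ T.score y := by
  intro n
  induction n with
  | zero =>
    intro x hd hxC hxA
    have hxr : x ≠ T.root := fun h => hxA (h ▸ hrootA)
    have := T.depth_node x hxr
    omega
  | succ n ih =>
    intro x hd hxC hxA
    have hxr : x ≠ T.root := fun h => hxA (h ▸ hrootA)
    by_cases hpA : T.parent x ∈ A
    · exact ⟨x, hxC, hxA, hpA, le_rfl⟩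
    · have hdn := T.depth_node x hxr
      obtain ⟨y, hy⟩ := ih (T.parent x) (by omega) (hC x hxC) hpA
      exact ⟨y, hy.1, hy.2.1, hy.2.2.1, (T.score_le_parent x hxr).trans hy.2.2.2⟩

/-- The maximal achievable score sum over prefix-closed subtrees of size N of a
rooted candidate lattice with multiplicative path scores is a concave function of N:
its increments over N are non-increasing. -/
theorem stmt17 {σ : Type} (T : ScoreTree σ) (Astar : ℕ → ℝ)
    (hAstar : ∀ N, 1 ≤ N →
      IsGreatest {v : ℝ | ∃ S : Finset σ, T.root ∈ S ∧ (∀ i ∈ S, T.parent i ∈ S) ∧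
        S.card = N ∧ ∑ i ∈ S, T.score i = v} (Astar N))
    (N : ℕ) (hN : 1 ≤ N) :
    Astar (N + 2) - Astar (N + 1) ≤ Astar (N + 1) - Astar N := by
  classical
  obtain ⟨A, hrootA, hclA, hcardA, hsumA⟩ := (hAstar N hN).1
  obtain ⟨C, hrootC, hclC, hcardC, hsumC⟩ := (hAstar (N + 2) (by omega)).1
  -- C \ A is nonempty
  have hne : (C \ A).Nonempty := by
    rw [Finset.sdiff_nonempty]
    intro hsub
    have := Finset.card_le_card hsub
    omega
  -- pick a deepest element x of C \ A
  obtain ⟨x, hxmem, hxmax⟩ := Finset.exists_max_image (C \ A) T.depth hne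
  have hxC : x ∈ C := (Finset.mem_sdiff.mp hxmem).1
  have hxA : x ∉ A := (Finset.mem_sdiff.mp hxmem).2
  have hxr : x ≠ T.root := fun h => hxA (h ▸ hrootA)
  -- C.erase x is prefix-closed of size N+1
  have hclC' : ∀ i ∈ C.erase x, T.parent i ∈ C.erase x := by
    intro i hi
    obtain ⟨hix, hiC⟩ := Finset.mem_erase.mp hi
    refine Finset.mem_erase.mpr ⟨?_, hclC i hiC⟩
    intro hpx
    -- i is a child of x in C; it must lie in C \ A and be deeper than x
    have hir : i ≠ T.root := by
      intro h
      rw [h, T.parent_root] at hpx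
      exact hxr hpx.symm
    have hiA : i ∉ A := by
      intro hiA
      exact hxA (hpx ▸ hclA i hiA)
    have := hxmax i (Finset.mem_sdiff.mpr ⟨hiC, hiA⟩)
    have := T.depth_node i hir
    rw [hpx] at this
    omega
  have hub1 : Astar (N + 2) - T.score x ≤ Astar (N + 1) := by
    have hmem : Astar (N + 2) - T.score x ∈ {v : ℝ | ∃ S : Finset σ, T.root ∈ S ∧
        (∀ i ∈ S, T.parent i ∈ S) ∧ S.card = N + 1 ∧ ∑ i ∈ S, T.score i = v} := by
      refine ⟨C.erase x, Finset.mem_erase.mpr ⟨Ne.symm hxr, hrootC⟩, hclC', ?_, ?_⟩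
      · rw [Finset.card_erase_of_mem hxC, hcardC]; omega
      · have h := Finset.sum_erase_add C T.score hxC
        rw [hsumC] at h
        linarith
    exact (hAstar (N + 1) (by omega)).2 hmem
  -- find an addable element y with score ≥ score x
  obtain ⟨y, hyC, hyA, hpyA, hxy⟩ :=
    T.exists_entry A C hrootA hclC (T.depth x) x le_rfl hxC hxA
  have hub2 : Astar N + T.score y ≤ Astar (N + 1) := by
    have hmem : Astar N + T.score y ∈ {v : ℝ | ∃ S : Finset σ, T.root ∈ S ∧
        (∀ i ∈ S, T.parent i ∈ S) ∧ S.card = N + 1 ∧ ∑ i ∈ S, T.score i = v} := by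
      refine ⟨insert y A, Finset.mem_insert_of_mem hrootA, ?_, ?_, ?_⟩
      · intro i hi
        rcases Finset.mem_insert.mp hi with h | h
        · exact Finset.mem_insert_of_mem (h ▸ hpyA)
        · exact Finset.mem_insert_of_mem (hclA i h)
      · rw [Finset.card_insert_of_notMem hyA, hcardA]
      · rw [Finset.sum_insert hyA, hsumA]; ring
    exact (hAstar (N + 1) (by omega)).2 hmem
  linarith
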